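/- For n ≥ 4, the broadcast dimension of the path P_n equals ⌊(2n+2)/5⌋. -/

import Mathlib

open SimpleGraph Finset

variable {V : Type*}

/-- truncated distance `d_k(x,y) = min(d(x,y), k+1)` with `d = ∞` across components. -/
noncomputable def truncDist (G : SimpleGraph V) (k : ℕ) (x y : V) : ℕ∞ :=
  min (G.edist x y) (k + 1)

/-- `f` is a resolving broadcast of `G`. -/
def IsResolvingBroadcast (G : SimpleGraph V) (f : V → ℕ) : Prop :=
  ∀ x y : V, x ≠ y → ∃ z : V, 0 < f z ∧ truncDist G (f z) x z ≠ truncDist G (f z) y z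

/-- broadcast dimension -/
noncomputable def bdim (G : SimpleGraph V) [Fintype V] : ℕ :=
  sInf {c : ℕ | ∃ f : V → ℕ, IsResolvingBroadcast G f ∧ ∑ v, f v = c}

/-- adjacency resolving set -/
def IsAdjResolvingSet (G : SimpleGraph V) (S : Set V) : Prop :=
  ∀ x y : V, x ≠ y → ∃ z ∈ S, truncDist G 1 x z ≠ truncDist G 1 y z

/-- adjacency dimension -/
noncomputable def adim (G : SimpleGraph V) [Fintype V] : ℕ :=
  sInf {n : ℕ | ∃ S : Finset V, IsAdjResolvingSet G ↑S ∧ S.card = n}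

/-- resolving set (metric dimension) -/
def IsResolvingSet (G : SimpleGraph V) (S : Set V) : Prop :=
  ∀ x y : V, x ≠ y → ∃ z ∈ S, G.edist x z ≠ G.edist y z

/-- metric dimension -/
noncomputable def mdim (G : SimpleGraph V) [Fintype V] : ℕ :=
  sInf {n : ℕ | ∃ S : Finset V, IsResolvingSet G ↑S ∧ S.card = n}

/-! ### Auxiliary lemmas: distance in the path graph -/

lemma Aux.pg_edist_le (n : ℕ) : ∀ (d : ℕ) (x y : Fin n), x.val + d = y.val →
    (pathGraph n).edist x y ≤ d := by
  intro d
  induction d with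
  | zero => intro x y h; have : x = y := Fin.ext (by omega); simp [this]
  | succ d ih =>
    intro x y h
    have hm : x.val + 1 < n := by omega
    set m : Fin n := ⟨x.val + 1, hm⟩ with hmdef
    have hadj : (pathGraph n).Adj x m := by rw [pathGraph_adj]; left; rfl
    have h1 : (pathGraph n).edist x m = 1 := edist_eq_one_iff_adj.mpr hadj
    have h2 : (pathGraph n).edist m y ≤ d := ih m y (by simp [hmdef]; omega)
    calc (pathGraph n).edist x y ≤ (pathGraph n).edist x m + (pathGraph n).edist m y :=
          SimpleGraph.edist_triangle
      _ ≤ 1 + d := by rw [h1]; exact add_le_add le_rfl h2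
      _ = ((d + 1 : ℕ) : ℕ∞) := by push_cast; ring

lemma Aux.pg_walk_len (n : ℕ) (x y : Fin n) (p : (pathGraph n).Walk x y) :
    Nat.dist x.val y.val ≤ p.length := by
  induction p with
  | nil => simp [Nat.dist]
  | cons hadj q ih =>
    rename_i a b c
    rw [pathGraph_adj] at hadj
    rw [SimpleGraph.Walk.length_cons]
    simp only [Nat.dist] at *
    omega

lemma Aux.pg_edist (n : ℕ) (x y : Fin n) :
    (pathGraph n).edist x y = (Nat.dist x.val y.val : ℕ∞) := by
  apply le_antisymm
  · rcases le_total x.val y.val with h | h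
    · have := Aux.pg_edist_le n (y.val - x.val) x y (by omega)
      calc (pathGraph n).edist x y ≤ ((y.val - x.val : ℕ) : ℕ∞) := this
        _ ≤ _ := Nat.cast_le.mpr (by simp only [Nat.dist]; omega)
    · rw [SimpleGraph.edist_comm]
      have := Aux.pg_edist_le n (x.val - y.val) y x (by omega)
      calc (pathGraph n).edist y x ≤ ((x.val - y.val : ℕ) : ℕ∞) := this
        _ ≤ _ := Nat.cast_le.mpr (by simp only [Nat.dist]; omega)
  · refine le_iInf fun p => ?_
    exact_mod_cast Aux.pg_walk_len n x y p

lemma Aux.truncDist_pg (n k : ℕ) (x z : Fin n) :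
    truncDist (pathGraph n) k x z = ((min (Nat.dist x.val z.val) (k + 1) : ℕ) : ℕ∞) := by
  rw [truncDist, Aux.pg_edist]
  norm_cast

/-! ### Counting landmarks -/

lemma Aux.card13 (n : ℕ) :
    ((range n).filter (fun i => i % 5 = 1 ∨ i % 5 = 3)).card = (2 * n + 2) / 5 := by
  induction n with
  | zero => simp
  | succ n ih =>
    rw [Finset.range_add_one, Finset.filter_insert]
    by_cases hc : n % 5 = 1 ∨ n % 5 = 3
    · rw [if_pos (by simpa using hc), Finset.card_insert_of_notMem (by simp)]
      omega
    · rw [if_neg (by simpa using hc)]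
      omega

lemma Aux.card03 (n : ℕ) :
    ((range n).filter (fun i => i % 5 = 0 ∨ i % 5 = 3)).card = (2 * n + 3) / 5 := by
  induction n with
  | zero => simp
  | succ n ih =>
    rw [Finset.range_add_one, Finset.filter_insert]
    by_cases hc : n % 5 = 0 ∨ n % 5 = 3
    · rw [if_pos (by simpa using hc), Finset.card_insert_of_notMem (by simp)]
      omega
    · rw [if_neg (by simpa using hc)]
      have h : n % 5 = 1 ∨ n % 5 = 2 ∨ n % 5 = 4 := by omega
      rcases h with h | h | h <;> omega

/-! ### Upper bound witnesses -/

lemma Aux.ub13 (n x y : ℕ) (hn : n % 5 ≠ 3) (hy : y < n) (hxy : x < y) :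
    ∃ z, z < n ∧ (z % 5 = 1 ∨ z % 5 = 3) ∧
      min (Nat.dist x z) 2 ≠ min (Nat.dist y z) 2 := by
  simp only [Nat.dist]
  have h5 : x % 5 = 0 ∨ x % 5 = 1 ∨ x % 5 = 2 ∨ x % 5 = 3 ∨ x % 5 = 4 := by omega
  rcases h5 with h | h | h | h | h
  · by_cases h2 : y = x + 2
    · exact ⟨x + 3, by omega⟩
    · exact ⟨x + 1, by omega⟩
  · exact ⟨x, by omega⟩
  · by_cases h2 : y = x + 2
    · exact ⟨x - 1, by omega⟩
    · exact ⟨x + 1, by omega⟩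
  · exact ⟨x, by omega⟩
  · exact ⟨x - 1, by omega⟩

lemma Aux.ub03 (n x y : ℕ) (hn : n % 5 = 3) (hy : y < n) (hxy : x < y) :
    ∃ z, z < n ∧ (z % 5 = 0 ∨ z % 5 = 3) ∧
      min (Nat.dist x z) 2 ≠ min (Nat.dist y z) 2 := by
  simp only [Nat.dist]
  have h5 : x % 5 = 0 ∨ x % 5 = 1 ∨ x % 5 = 2 ∨ x % 5 = 3 ∨ x % 5 = 4 := by omega
  rcases h5 with h | h | h | h | h
  · exact ⟨x, by omega⟩
  · exact ⟨x - 1, by omega⟩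
  · by_cases h2 : y = x + 2
    · exact ⟨x + 3, by omega⟩
    · exact ⟨x + 1, by omega⟩
  · exact ⟨x, by omega⟩
  · exact ⟨x - 1, by omega⟩

/-! ### The lower bound counting argument -/

lemma Aux.lb (n : ℕ) (f : ℕ → ℕ)
    (hres : ∀ x y : ℕ, x < n → y < n → x ≠ y → ∃ z, z < n ∧ 0 < f z ∧
      min (Nat.dist x z) (f z + 1) ≠ min (Nat.dist y z) (f z + 1)) :
    2 * n ≤ 5 * (∑ z ∈ Finset.range n, f z) + 2 := by
  classical
  set S : Finset ℕ := (Finset.range n).filter (fun z => 0 < f z) with hS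
  set μ : ℕ → ℕ := fun x => (S.filter (fun z => Nat.dist x z ≤ f z)).card with hμ
  set b : ℕ → ℕ := fun z => ((Finset.range n).filter (fun x => Nat.dist x z ≤ f z)).card with hb
  set p : ℕ → ℕ := fun z => min (f z) (min z (n - 1 - z)) with hp
  have hU : ((Finset.range n).filter (fun x => μ x = 0)).card ≤ 1 := by
    rw [Finset.card_le_one]
    intro u hu v hv
    by_contra hne
    simp only [Finset.mem_filter, Finset.mem_range] at hu hv
    obtain ⟨z, hzn, hzf, hne2⟩ := hres u v hu.1 hv.1 hne
    have hz : z ∈ S := by simp only [hS, Finset.mem_filter, Finset.mem_range]; exact ⟨hzn, hzf⟩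
    have h1 : ¬ (Nat.dist u z ≤ f z) := by
      intro h
      have hmem : z ∈ S.filter (fun t => Nat.dist u t ≤ f t) := Finset.mem_filter.mpr ⟨hz, h⟩
      exact Finset.card_ne_zero_of_mem hmem hu.2
    have h2 : ¬ (Nat.dist v z ≤ f z) := by
      intro h
      have hmem : z ∈ S.filter (fun t => Nat.dist v t ≤ f t) := Finset.mem_filter.mpr ⟨hz, h⟩
      exact Finset.card_ne_zero_of_mem hmem hv.2
    omega
  have hA : n ≤ (∑ x ∈ Finset.range n, min (μ x) 1) + 1 := by
    have hsplit := Finset.card_filter_add_card_filter_not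
      (s := Finset.range n) (p := fun x => μ x = 0)
    have hcf : ((Finset.range n).filter (fun x => ¬ μ x = 0)).card
        = ∑ x ∈ Finset.range n, min (μ x) 1 := by
      rw [Finset.card_filter]
      exact Finset.sum_congr rfl fun x _ => by split <;> omega
    rw [Finset.card_range] at hsplit
    omega
  have hAD : (∑ x ∈ Finset.range n, min (μ x) 1) + (∑ x ∈ Finset.range n, (μ x - 1))
      = ∑ x ∈ Finset.range n, μ x := by
    rw [← Finset.sum_add_distrib]
    exact Finset.sum_congr rfl fun x _ => by omega
  have hM : ∑ x ∈ Finset.range n, μ x = ∑ z ∈ S, b z := by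
    simp only [hμ, hb, Finset.card_filter]
    exact Finset.sum_comm
  have hbz : ∀ z ∈ S, 2 * b z ≤ 5 * f z + p z := by
    intro z hz
    simp only [hS, Finset.mem_filter, Finset.mem_range] at hz
    have hsub : (Finset.range n).filter (fun x => Nat.dist x z ≤ f z)
        ⊆ Finset.Icc (z - f z) (min (z + f z) (n - 1)) := by
      intro x hx
      rw [Finset.mem_filter] at hx
      simp only [Finset.mem_filter, Finset.mem_range, Nat.dist] at hx
      simp only [Finset.mem_Icc]
      omega
    have hcard := Finset.card_le_card hsub
    rw [Nat.card_Icc] at hcard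
    have hb2 : b z ≤ min (z + f z) (n - 1) + 1 - (z - f z) := hcard
    simp only [hp]
    omega
  have key : ∀ z d, z ∈ S → 1 ≤ d → d ≤ p z →
      ∃ w, w < n ∧ 2 ≤ μ w ∧ Nat.dist w z = d := by
    intro z d hz h1 h2
    have hzS := hz
    simp only [hS, Finset.mem_filter, Finset.mem_range] at hz
    obtain ⟨hzn, hzf⟩ := hz
    simp only [hp] at h2
    have hd : d ≤ z ∧ d ≤ n - 1 - z ∧ d ≤ f z := by omega
    obtain ⟨z', hz'n, hz'f, hne⟩ := hres (z - d) (z + d) (by omega) (by omega) (by omega)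
    have hz'S : z' ∈ S := by
      simp only [hS, Finset.mem_filter, Finset.mem_range]; exact ⟨hz'n, hz'f⟩
    have hcov : Nat.dist (z - d) z' ≤ f z' ∨ Nat.dist (z + d) z' ≤ f z' := by
      by_contra hcon
      push_neg at hcon
      simp only [Nat.dist] at hne hcon
      omega
    have hz'z : z' ≠ z := by
      intro he
      subst he
      simp only [Nat.dist] at hne
      omega
    have two_le : ∀ w, w < n → Nat.dist w z ≤ f z → Nat.dist w z' ≤ f z' → 2 ≤ μ w := by
      intro w _ hwz hwz'
      have hsub2 : ({z, z'} : Finset ℕ) ⊆ S.filter (fun t => Nat.dist w t ≤ f t) := by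
        intro t ht
        simp only [Finset.mem_insert, Finset.mem_singleton] at ht
        rcases ht with rfl | rfl
        · exact Finset.mem_filter.mpr ⟨hzS, hwz⟩
        · exact Finset.mem_filter.mpr ⟨hz'S, hwz'⟩
      calc 2 = ({z, z'} : Finset ℕ).card := (Finset.card_pair (Ne.symm hz'z)).symm
        _ ≤ μ w := Finset.card_le_card hsub2
    rcases hcov with hc | hc
    · exact ⟨z - d, by omega, two_le _ (by omega) (by simp only [Nat.dist]; omega) hc,
        by simp only [Nat.dist]; omega⟩
    · exact ⟨z + d, by omega, two_le _ (by omega) (by simp only [Nat.dist]; omega) hc,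
        by simp only [Nat.dist]; omega⟩
  set T : Finset ℕ := (Finset.range n).filter (fun x => 2 ≤ μ x) with hT
  have hP : (∑ z ∈ S, p z) ≤ ∑ x ∈ T, μ x := by
    have e1 : (∑ z ∈ S, p z) = (S.sigma (fun z => Finset.Icc 1 (p z))).card := by
      rw [Finset.card_sigma]
      exact Finset.sum_congr rfl fun z _ => by rw [Nat.card_Icc]; omega
    have e2 : (∑ x ∈ T, μ x)
        = (T.sigma (fun x => S.filter (fun z => Nat.dist x z ≤ f z))).card := by
      rw [Finset.card_sigma]
    rw [e1, e2]
    have hgood : ∀ q : (_ : ℕ) × ℕ, q ∈ S.sigma (fun z => Finset.Icc 1 (p z)) →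
        ∃ w, w < n ∧ 2 ≤ μ w ∧ Nat.dist w q.1 = q.2 := by
      intro q hq
      rw [Finset.mem_sigma] at hq
      rw [Finset.mem_Icc] at hq
      exact key q.1 q.2 hq.1 hq.2.1 hq.2.2
    set F : (_ : ℕ) × ℕ → (_ : ℕ) × ℕ := fun q =>
      if h : ∃ w, w < n ∧ 2 ≤ μ w ∧ Nat.dist w q.1 = q.2 then ⟨h.choose, q.1⟩ else q with hF
    apply Finset.card_le_card_of_injOn F
    · intro q hq
      have hg := hgood q hq
      obtain ⟨hw1, hw2, hw3⟩ := hg.choose_spec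
      rw [Finset.mem_coe, Finset.mem_sigma, Finset.mem_Icc] at hq
      have m1 : hg.choose ∈ T := by
        rw [hT, Finset.mem_filter, Finset.mem_range]; exact ⟨hw1, hw2⟩
      have m2 : q.1 ∈ S.filter (fun z => Nat.dist hg.choose z ≤ f z) := by
        rw [Finset.mem_filter]
        refine ⟨hq.1, ?_⟩
        rw [hw3]
        have h22 := hq.2.2
        simp only [hp] at h22
        omega
      simp only [hF, dif_pos hg]
      exact Finset.mem_sigma.mpr ⟨m1, m2⟩
    · intro q1 hq1 q2 hq2 heq
      obtain ⟨a1, d1⟩ := q1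
      obtain ⟨a2, d2⟩ := q2
      simp only [Finset.coe_sigma, Set.mem_sigma_iff] at hq1 hq2
      have hg1 := hgood ⟨a1, d1⟩ (by rw [Finset.mem_sigma]; exact ⟨hq1.1, hq1.2⟩)
      have hg2 := hgood ⟨a2, d2⟩ (by rw [Finset.mem_sigma]; exact ⟨hq2.1, hq2.2⟩)
      obtain ⟨h11, h12, h13⟩ := hg1.choose_spec
      obtain ⟨h21, h22, h23⟩ := hg2.choose_spec
      dsimp only at h13 h23
      simp only [hF, dif_pos hg1, dif_pos hg2, Sigma.mk.inj_iff] at heq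
      obtain ⟨hw, hz⟩ := heq
      have hz' : a1 = a2 := eq_of_heq hz
      subst hz'
      have hd : d1 = d2 := by rw [← h13, ← h23, hw]
      simp [hd]
  have hTD : (∑ x ∈ T, μ x) ≤ 2 * ∑ x ∈ Finset.range n, (μ x - 1) := by
    calc (∑ x ∈ T, μ x) ≤ ∑ x ∈ T, 2 * (μ x - 1) := by
          apply Finset.sum_le_sum
          intro x hx
          rw [hT, Finset.mem_filter] at hx
          omega
      _ ≤ ∑ x ∈ Finset.range n, 2 * (μ x - 1) := by
          apply Finset.sum_le_sum_of_subset
          rw [hT]; exact Finset.filter_subset _ _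
      _ = 2 * ∑ x ∈ Finset.range n, (μ x - 1) := by rw [Finset.mul_sum]
  have hW : (∑ z ∈ S, f z) = ∑ z ∈ Finset.range n, f z := by
    rw [hS]
    exact Finset.sum_filter_of_ne fun x _ h => Nat.pos_of_ne_zero h
  have hsumb : 2 * (∑ z ∈ S, b z) ≤ 5 * (∑ z ∈ S, f z) + ∑ z ∈ S, p z := by
    have h := Finset.sum_le_sum hbz
    rw [Finset.sum_add_distrib] at h
    rw [← Finset.mul_sum] at h
    rw [← Finset.mul_sum] at h
    exact h
  omega

/-! ### Main theorem -/

theorem stmt_3 (n : ℕ) (hn : 4 ≤ n) :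
    bdim (SimpleGraph.pathGraph n) = (2 * n + 2) / 5 := by
  have hmem : (2 * n + 2) / 5 ∈
      {c : ℕ | ∃ f : Fin n → ℕ, IsResolvingBroadcast (pathGraph n) f ∧ ∑ v, f v = c} := by
    by_cases h3 : n % 5 = 3
    · refine ⟨fun v => if v.val % 5 = 0 ∨ v.val % 5 = 3 then 1 else 0, ?_, ?_⟩
      · intro x y hxy
        rcases Nat.lt_trichotomy x.val y.val with h | h | h
        · obtain ⟨z, hz, hzR, hne⟩ := Aux.ub03 n x.val y.val h3 y.isLt h
          refine ⟨⟨z, hz⟩, ?_⟩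
          have hgz : (if (⟨z, hz⟩ : Fin n).val % 5 = 0 ∨ (⟨z, hz⟩ : Fin n).val % 5 = 3
              then 1 else 0) = 1 := if_pos hzR
          simp only [hgz]
          refine ⟨one_pos, ?_⟩
          rw [Aux.truncDist_pg, Aux.truncDist_pg]
          intro hcast
          exact hne (by exact_mod_cast hcast)
        · exact absurd (Fin.ext h) hxy
        · obtain ⟨z, hz, hzR, hne⟩ := Aux.ub03 n y.val x.val h3 x.isLt h
          refine ⟨⟨z, hz⟩, ?_⟩
          have hgz : (if (⟨z, hz⟩ : Fin n).val % 5 = 0 ∨ (⟨z, hz⟩ : Fin n).val % 5 = 3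
              then 1 else 0) = 1 := if_pos hzR
          simp only [hgz]
          refine ⟨one_pos, ?_⟩
          rw [Aux.truncDist_pg, Aux.truncDist_pg]
          intro hcast
          exact hne (by exact_mod_cast hcast.symm)
      · have h1 : (∑ v : Fin n, if v.val % 5 = 0 ∨ v.val % 5 = 3 then 1 else 0)
            = ∑ i ∈ range n, (if i % 5 = 0 ∨ i % 5 = 3 then 1 else 0) :=
          Fin.sum_univ_eq_sum_range (fun i => if i % 5 = 0 ∨ i % 5 = 3 then 1 else 0) n
        rw [h1, ← Finset.card_filter, Aux.card03]
        omega
    · refine ⟨fun v => if v.val % 5 = 1 ∨ v.val % 5 = 3 then 1 else 0, ?_, ?_⟩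
      · intro x y hxy
        rcases Nat.lt_trichotomy x.val y.val with h | h | h
        · obtain ⟨z, hz, hzR, hne⟩ := Aux.ub13 n x.val y.val h3 y.isLt h
          refine ⟨⟨z, hz⟩, ?_⟩
          have hgz : (if (⟨z, hz⟩ : Fin n).val % 5 = 1 ∨ (⟨z, hz⟩ : Fin n).val % 5 = 3
              then 1 else 0) = 1 := if_pos hzR
          simp only [hgz]
          refine ⟨one_pos, ?_⟩
          rw [Aux.truncDist_pg, Aux.truncDist_pg]
          intro hcast
          exact hne (by exact_mod_cast hcast)
        · exact absurd (Fin.ext h) hxy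
        · obtain ⟨z, hz, hzR, hne⟩ := Aux.ub13 n y.val x.val h3 x.isLt h
          refine ⟨⟨z, hz⟩, ?_⟩
          have hgz : (if (⟨z, hz⟩ : Fin n).val % 5 = 1 ∨ (⟨z, hz⟩ : Fin n).val % 5 = 3
              then 1 else 0) = 1 := if_pos hzR
          simp only [hgz]
          refine ⟨one_pos, ?_⟩
          rw [Aux.truncDist_pg, Aux.truncDist_pg]
          intro hcast
          exact hne (by exact_mod_cast hcast.symm)
      · have h1 : (∑ v : Fin n, if v.val % 5 = 1 ∨ v.val % 5 = 3 then 1 else 0)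
            = ∑ i ∈ range n, (if i % 5 = 1 ∨ i % 5 = 3 then 1 else 0) :=
          Fin.sum_univ_eq_sum_range (fun i => if i % 5 = 1 ∨ i % 5 = 3 then 1 else 0) n
        rw [h1, ← Finset.card_filter, Aux.card13]
  rw [bdim]
  refine le_antisymm (Nat.sInf_le hmem) (le_csInf ⟨_, hmem⟩ ?_)
  rintro c ⟨f, hf, rfl⟩
  set F : ℕ → ℕ := fun i => if h : i < n then f ⟨i, h⟩ else 0 with hFdef
  have hres : ∀ x y : ℕ, x < n → y < n → x ≠ y → ∃ z, z < n ∧ 0 < F z ∧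
      min (Nat.dist x z) (F z + 1) ≠ min (Nat.dist y z) (F z + 1) := by
    intro x y hx hy hxy
    obtain ⟨z, hz0, hzne⟩ := hf ⟨x, hx⟩ ⟨y, hy⟩ (fun h => hxy (congrArg Fin.val h))
    have hFz : F z.val = f z := by simp [hFdef, z.isLt]
    refine ⟨z.val, z.isLt, by omega, ?_⟩
    rw [hFz]
    intro hmin
    apply hzne
    rw [Aux.truncDist_pg, Aux.truncDist_pg]
    exact_mod_cast hmin
  have hlb := Aux.lb n F hres
  have hsum : ∑ i ∈ Finset.range n, F i = ∑ v : Fin n, f v := by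
    rw [← Fin.sum_univ_eq_sum_range F n]
    exact Finset.sum_congr rfl fun v _ => by simp [hFdef, v.isLt]
  omega
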